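/- Let x = x₁⋯x_n and y = y₁⋯y_n be two sequences over Σ (letters without primes), and let ŷ := y'_n y'_{n−1} ⋯ y'_1 be the reversed sequence of matching letters of y. Then the RNA folding score of the concatenation equals the length of the longest common subsequence: RNA(x ∘ ŷ) = LCS(x, y). -/

import Mathlib

/-!
Formalization of (weighted) RNA folding from
"If the Current Clique Algorithms are Optimal, so is Valiant's Parser"
(Abboud, Backurs, Vassilevska Williams), Section 3.

Letters come from `Σ ∪ Σ'`, modelled as `σ ⊕ σ`: `Sum.inl a` is the letter `a ∈ Σ` and
`Sum.inr a` is its matching letter `a' ∈ Σ'`.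
-/

namespace RNAFolding

/-- Letters `x` and `y` match iff `y = x'` or `x = y'`. -/
def LMatches {σ : Type*} : σ ⊕ σ → σ ⊕ σ → Prop
  | .inl a, .inr b => a = b
  | .inr a, .inl b => a = b
  | _, _ => False

/-- Two pairs of indices `(i₁,j₁)`, `(i₂,j₂)` with `i₁<j₁` and `i₂<j₂` "cross" iff they share an
index, or `i₁<i₂<j₁<j₂`, or `i₂<i₁<j₂<j₁`. -/
def Crosses (p q : ℕ × ℕ) : Prop :=
  p.1 = q.1 ∨ p.1 = q.2 ∨ p.2 = q.1 ∨ p.2 = q.2 ∨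
    (p.1 < q.1 ∧ q.1 < p.2 ∧ p.2 < q.2) ∨ (q.1 < p.1 ∧ p.1 < q.2 ∧ q.2 < p.2)

/-- `A` is a valid folding of `S`: every pair `(i,j) ∈ A` satisfies `i < j < |S|` and the letters
`S[i]`, `S[j]` match, and no two pairs of `A` cross. -/
def IsFolding {σ : Type*} (S : List (σ ⊕ σ)) (A : Finset (ℕ × ℕ)) : Prop :=
  (∀ p ∈ A, p.1 < p.2 ∧ p.2 < S.length ∧ ∃ x ∈ S[p.1]?, ∃ y ∈ S[p.2]?, LMatches x y) ∧
    ∀ p ∈ A, ∀ q ∈ A, p ≠ q → ¬ Crosses p q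

/-- The weighted RNA folding score `WRNA(S)`: the maximum of `∑_{(i,j) ∈ A} w(S[i])` over all
valid foldings `A` of `S` (with the weight function extended to `Σ'` by `w(σ') = w(σ)`). -/
noncomputable def WRNA {σ : Type*} (w : σ → ℕ) (S : List (σ ⊕ σ)) : ℕ :=
  sSup {m | ∃ A : Finset (ℕ × ℕ),
    IsFolding S A ∧ ∑ p ∈ A, (S.map (Sum.elim w w)).getD p.1 0 = m}

/-- The (unweighted) RNA folding score `RNA(S)`: the maximum number of non-crossing matching
pairs, i.e. the weighted score with all weights equal to `1`. -/
noncomputable def RNA {σ : Type*} (S : List (σ ⊕ σ)) : ℕ := WRNA (fun _ => 1) S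

/-- the remark in the introduction of the paper.
Let `x = x₁⋯x_n` and `y = y₁⋯y_n` be two sequences over `Σ` (letters without primes), and let
`ŷ := y'_n y'_{n−1} ⋯ y'_1` be the reversed sequence of matching letters of `y`. Then the RNA
folding score of the concatenation equals the length of the longest common subsequence:
`RNA(x ∘ ŷ) = LCS(x, y)`. -/
lemma exists_common_subseq {σ : Type*} : ∀ (k : ℕ) (x y : List σ) (B : Finset (ℕ × ℕ)),
    B.card = k →
    (∀ p ∈ B, ∃ a, x[p.1]? = some a ∧ y[p.2]? = some a) →
    (∀ p ∈ B, ∀ q ∈ B, (p.1 < q.1 ↔ p.2 < q.2)) →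
    ∃ z : List σ, z.Sublist x ∧ z.Sublist y ∧ z.length = k := by
  intro k
  induction k with
  | zero =>
    intro x y B hc _ _
    exact ⟨[], List.nil_sublist _, List.nil_sublist _, rfl⟩
  | succ k ih =>
    intro x y B hc hmem hmono
    have hne : B.Nonempty := by rw [← Finset.card_pos, hc]; omega
    obtain ⟨p, hp, hpmax⟩ := B.exists_max_image Prod.fst hne
    have hkey : ∀ q ∈ B.erase p, q.1 < p.1 ∧ q.2 < p.2 := by
      intro q hq
      have hq' := Finset.mem_of_mem_erase hq
      have hne' : q ≠ p := Finset.ne_of_mem_erase hq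
      have h1 : q.1 ≤ p.1 := hpmax q hq'
      have h1' : q.1 < p.1 := by
        rcases lt_or_eq_of_le h1 with h | h
        · exact h
        · exfalso; apply hne'
          have e1 := hmono q hq' p hp
          have e2 := hmono p hp q hq'
          exact Prod.ext h (by omega)
      exact ⟨h1', (hmono q hq' p hp).mp h1'⟩
    obtain ⟨a, hxa, hya⟩ := hmem p hp
    have hx1 : p.1 < x.length := by
      by_contra hcon
      rw [List.getElem?_eq_none (by omega)] at hxa; simp at hxa
    have hy1 : p.2 < y.length := by
      by_contra hcon
      rw [List.getElem?_eq_none (by omega)] at hya; simp at hya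
    obtain ⟨z, hzx, hzy, hzl⟩ := ih (x.take p.1) (y.take p.2) (B.erase p)
      (by rw [Finset.card_erase_of_mem hp, hc]; omega)
      (by
        intro q hq
        obtain ⟨hq1, hq2⟩ := hkey q hq
        obtain ⟨b, hb1, hb2⟩ := hmem q (Finset.mem_of_mem_erase hq)
        exact ⟨b, by rw [List.getElem?_take_of_lt hq1]; exact hb1,
          by rw [List.getElem?_take_of_lt hq2]; exact hb2⟩)
      (fun q hq r hr =>
        hmono q (Finset.mem_of_mem_erase hq) r (Finset.mem_of_mem_erase hr))
    have hxt : (x.take p.1 ++ [a]).Sublist x := by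
      have h := List.take_sublist (p.1 + 1) x
      rw [List.take_succ, hxa] at h
      simpa using h
    have hyt : (y.take p.2 ++ [a]).Sublist y := by
      have h := List.take_sublist (p.2 + 1) y
      rw [List.take_succ, hya] at h
      simpa using h
    exact ⟨z ++ [a], ((hzx.append (List.Sublist.refl [a])).trans hxt),
      ((hzy.append (List.Sublist.refl [a])).trans hyt), by simp [hzl]⟩

lemma sum_weight_one {σ : Type*} (S : List (σ ⊕ σ)) (A : Finset (ℕ × ℕ))
    (h : ∀ p ∈ A, p.1 < S.length) :
    ∑ p ∈ A, (S.map (Sum.elim (fun _ => (1 : ℕ)) fun _ => 1)).getD p.1 0 = A.card := by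
  rw [Finset.card_eq_sum_ones]
  refine Finset.sum_congr rfl fun p hp => ?_
  have hp1 := h p hp
  rw [List.getD_eq_getElem?_getD, List.getElem?_map,
    List.getElem?_eq_getElem hp1]
  rcases S[p.1] with a | a <;> rfl

theorem rna_append_reverse_eq_lcs {σ : Type*} (x y : List σ) (h : x.length = y.length) :
    RNA ((x.map Sum.inl : List (σ ⊕ σ)) ++ (y.map Sum.inr).reverse) =
      sSup {m | ∃ z : List σ, z.Sublist x ∧ z.Sublist y ∧ z.length = m} := by
  set n := x.length with hn
  set S : List (σ ⊕ σ) := (x.map Sum.inl : List (σ ⊕ σ)) ++ (y.map Sum.inr).reverse with hS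
  have hlen : S.length = n + n := by simp [hS, ← h]; rfl
  have hS1 : ∀ i (hi : i < n), S[i]? = some (.inl (x[i]'hi)) := by
    intro i hi
    rw [hS, List.getElem?_append_left (by simpa using hi), List.getElem?_map,
      List.getElem?_eq_getElem hi]
    rfl
  have hS2 : ∀ j (hj : j < y.length), S[2 * n - 1 - j]? = some (.inr (y[j]'hj)) := by
    intro j hj
    have hj' : j < n := by omega
    have h1 : (x.map Sum.inl : List (σ ⊕ σ)).length ≤ 2 * n - 1 - j := by
      simp; omega
    rw [hS, List.getElem?_append_right h1]
    have h2 : 2 * n - 1 - j - (x.map Sum.inl : List (σ ⊕ σ)).length = n - 1 - j := by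
      simp; omega
    rw [h2, List.getElem?_reverse (by simp [← h]; omega), List.getElem?_map]
    have h3 : ((y.map Sum.inr : List (σ ⊕ σ))).length - 1 - (n - 1 - j) = j := by simp [← h]; omega
    rw [h3, List.getElem?_eq_getElem hj]
    rfl
  rw [RNA, WRNA]
  congr 1
  ext m
  simp only [Set.mem_setOf_eq]
  constructor
  · rintro ⟨A, ⟨hA1, hA2⟩, hsum⟩
    -- per-pair analysis
    have hpairs : ∀ p ∈ A, p.1 < n ∧ n ≤ p.2 ∧ p.2 < n + n ∧
        ∃ a, x[p.1]? = some a ∧ y[2 * n - 1 - p.2]? = some a := by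
      intro p hp
      obtain ⟨h12, h2len, u, hu, v, hv, huv⟩ := hA1 p hp
      rw [hlen] at h2len
      have hp1n : p.1 < n := by
        by_contra hcon
        push_neg at hcon
        have j1 : 2 * n - 1 - p.1 < y.length := by omega
        have e1 : 2 * n - 1 - (2 * n - 1 - p.1) = p.1 := by omega
        have := hS2 (2 * n - 1 - p.1) j1
        rw [e1] at this
        rw [this] at hu
        have j2 : 2 * n - 1 - p.2 < y.length := by omega
        have e2 : 2 * n - 1 - (2 * n - 1 - p.2) = p.2 := by omega
        have := hS2 (2 * n - 1 - p.2) j2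
        rw [e2] at this
        rw [this] at hv
        simp only [Option.mem_some_iff] at hu hv
        subst hu; subst hv
        exact huv
      refine ⟨hp1n, ?_, h2len, ?_⟩
      · by_contra hcon
        push_neg at hcon
        have := hS1 p.1 hp1n
        rw [this] at hu
        have hp2n : p.2 < n := hcon
        have := hS1 p.2 hp2n
        rw [this] at hv
        simp only [Option.mem_some_iff] at hu hv
        subst hu; subst hv
        exact huv
      · have hp2n : n ≤ p.2 := by
          by_contra hcon
          push_neg at hcon
          have := hS1 p.1 hp1n
          rw [this] at hu
          have := hS1 p.2 hcon
          rw [this] at hv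
          simp only [Option.mem_some_iff] at hu hv
          subst hu; subst hv
          exact huv
        have j2 : 2 * n - 1 - p.2 < y.length := by omega
        have e2 : 2 * n - 1 - (2 * n - 1 - p.2) = p.2 := by omega
        have hv' := hS2 (2 * n - 1 - p.2) j2
        rw [e2] at hv'
        rw [hv'] at hv
        rw [hS1 p.1 hp1n] at hu
        simp only [Option.mem_some_iff] at hu hv
        subst hu; subst hv
        refine ⟨x[p.1]'hp1n, List.getElem?_eq_getElem hp1n, ?_⟩
        rw [List.getElem?_eq_getElem j2]
        exact congrArg some huv.symm
    -- ordering
    have hord : ∀ p ∈ A, ∀ q ∈ A, (p.1 < q.1 → q.2 < p.2) := by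
      intro p hp q hq hlt
      obtain ⟨hp1, hp2, hp3, -⟩ := hpairs p hp
      obtain ⟨hq1, hq2, hq3, -⟩ := hpairs q hq
      have hne : p ≠ q := fun he => by rw [he] at hlt; omega
      have hnc := hA2 p hp q hq hne
      rw [Crosses] at hnc
      omega
    have hord' : ∀ p ∈ A, ∀ q ∈ A, (p.1 < q.1 ↔ q.2 < p.2) := by
      intro p hp q hq
      constructor
      · exact hord p hp q hq
      · intro hlt
        have hne : p ≠ q := fun he => by rw [he] at hlt; omega
        have hnc := hA2 p hp q hq hne
        rcases lt_trichotomy p.1 q.1 with hc | hc | hc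
        · exact hc
        · exfalso; exact hnc (Or.inl hc)
        · exfalso
          have := hord q hq p hp hc
          omega
    -- image finset
    set B : Finset (ℕ × ℕ) := A.image (fun p => (p.1, 2 * n - 1 - p.2)) with hB
    have hinj : Set.InjOn (fun p : ℕ × ℕ => (p.1, 2 * n - 1 - p.2)) A := by
      intro p hp q hq he
      obtain ⟨-, hp2, hp3, -⟩ := hpairs p hp
      obtain ⟨-, hq2, hq3, -⟩ := hpairs q hq
      simp only [Prod.mk.injEq] at he
      exact Prod.ext he.1 (by omega)
    have hcard : B.card = A.card := Finset.card_image_of_injOn hinj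
    have hsum' : A.card = m := by
      rw [← hsum]
      exact (sum_weight_one S A fun p hp => by
        obtain ⟨h12, h2len, -⟩ := hA1 p hp; omega).symm
    obtain ⟨z, hzx, hzy, hzl⟩ := exists_common_subseq m x y B
      (by rw [hcard, hsum'])
      (by
        intro p' hp'
        rw [hB, Finset.mem_image] at hp'
        obtain ⟨p, hp, rfl⟩ := hp'
        obtain ⟨-, -, -, a, ha1, ha2⟩ := hpairs p hp
        exact ⟨a, ha1, ha2⟩)
      (by
        intro p' hp' q' hq'
        rw [hB, Finset.mem_image] at hp' hq'
        obtain ⟨p, hp, rfl⟩ := hp'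
        obtain ⟨q, hq, rfl⟩ := hq'
        obtain ⟨-, hp2, hp3, -⟩ := hpairs p hp
        obtain ⟨-, hq2, hq3, -⟩ := hpairs q hq
        have := hord' p hp q hq
        simp only
        omega)
    exact ⟨z, hzx, hzy, hzl⟩
  · rintro ⟨z, hzx, hzy, hzl⟩
    obtain ⟨f, hf⟩ := List.sublist_iff_exists_fin_orderEmbedding_get_eq.mp hzx
    obtain ⟨g, hg⟩ := List.sublist_iff_exists_fin_orderEmbedding_get_eq.mp hzy
    set A : Finset (ℕ × ℕ) :=
      Finset.image (fun t : Fin z.length => (((f t : ℕ)), 2 * n - 1 - (g t : ℕ)))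
        Finset.univ with hA
    have hmem : ∀ p ∈ A, ∃ t : Fin z.length, p = ((f t : ℕ), 2 * n - 1 - (g t : ℕ)) := by
      intro p hp
      rw [hA, Finset.mem_image] at hp
      obtain ⟨t, -, rfl⟩ := hp
      exact ⟨t, rfl⟩
    have hbound : ∀ t : Fin z.length, (f t : ℕ) < n ∧ (g t : ℕ) < n := by
      intro t
      exact ⟨(f t).isLt, by have := (g t).isLt; omega⟩
    have hgy : ∀ t : Fin z.length, (g t : ℕ) < y.length := fun t => (g t).isLt
    have hfolding : IsFolding S A := by
      constructor
      · intro p hp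
        obtain ⟨t, rfl⟩ := hmem p hp
        obtain ⟨hf1, hg1⟩ := hbound t
        refine ⟨by simp only; omega, by simp only; omega, ?_⟩
        refine ⟨.inl (x[(f t : ℕ)]'(f t).isLt), ?_, .inr (y[(g t : ℕ)]'(g t).isLt), ?_, ?_⟩
        · rw [hS1 (f t : ℕ) (f t).isLt]; rfl
        · rw [hS2 (g t : ℕ) (g t).isLt]; rfl
        · show x[(f t : ℕ)]'(f t).isLt = y[(g t : ℕ)]'(g t).isLt
          have h1 := hf t
          have h2 := hg t
          simp only [List.get_eq_getElem] at h1 h2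
          rw [← h1, ← h2]
      · intro p hp q hq hne
        obtain ⟨t, rfl⟩ := hmem p hp
        obtain ⟨s, rfl⟩ := hmem q hq
        obtain ⟨hf1, hg1⟩ := hbound t
        obtain ⟨hf2, hg2⟩ := hbound s
        have hts : t ≠ s := fun he => hne (by rw [he])
        rcases lt_or_gt_of_ne hts with hlt | hlt
        · have e1 : f t < f s := f.strictMono hlt
          have e2 : g t < g s := g.strictMono hlt
          have e1' : (f t : ℕ) < (f s : ℕ) := e1
          have e2' : (g t : ℕ) < (g s : ℕ) := e2
          rw [Crosses]
          simp only
          omega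
        · have e1 : f s < f t := f.strictMono hlt
          have e2 : g s < g t := g.strictMono hlt
          have e1' : (f s : ℕ) < (f t : ℕ) := e1
          have e2' : (g s : ℕ) < (g t : ℕ) := e2
          rw [Crosses]
          simp only
          omega
    refine ⟨A, hfolding, ?_⟩
    rw [sum_weight_one S A (fun p hp => by
      obtain ⟨h12, h2len, -⟩ := hfolding.1 p hp; omega)]
    rw [hA, Finset.card_image_of_injective _ ?_, Finset.card_univ, Fintype.card_fin, hzl]
    intro t s he
    simp only [Prod.mk.injEq] at he
    exact f.injective (Fin.val_injective he.1)

end RNAFolding
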